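/- For every α ≥ 1 there exist n = 3 values 0 < v₁ < v₂ < v₃ and a prior f_𝒟 on them such that no buyer-optimal signaling scheme is α-majorized: for every buyer-optimal signaling scheme Z there exist a signaling scheme Z' and m ∈ (0,1] with α·PF(s_Z, m) < PF(s_{Z'}, m). -/

import Mathlib

open Finset MeasureTheory

namespace PD

noncomputable section

/-- Complementary CDF of a mass function `fS` at value `v i`. -/
def G {n : ℕ} (v fS : Fin n → ℝ) (i : Fin n) : ℝ :=
  ∑ j ∈ Finset.univ.filter (fun j => v i ≤ v j), fS j

/-- A signal is a probability mass function on the values. -/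
def IsSignal {n : ℕ} (fS : Fin n → ℝ) : Prop :=
  (∀ i, 0 ≤ fS i) ∧ ∑ i, fS i = 1

/-- The index of the seller's price: the smallest index maximizing `v i * G i`. -/
def priceIdx {n : ℕ} [NeZero n] (v fS : Fin n → ℝ) : Fin n :=
  (Finset.univ.filter (fun i => ∀ j, v j * G v fS j ≤ v i * G v fS i)).min' (by
    haveI : Nonempty (Fin n) := ⟨⟨0, Nat.pos_of_ne_zero (NeZero.ne n)⟩⟩
    obtain ⟨b, _, hb⟩ := Finset.exists_max_image (Finset.univ : Finset (Fin n))
      (fun i => v i * G v fS i) Finset.univ_nonempty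
    exact ⟨b, Finset.mem_filter.mpr ⟨Finset.mem_univ _, fun j => hb j (Finset.mem_univ _)⟩⟩)

/-- Consumer surplus of value `v i` under signal `fS`. -/
def cs {n : ℕ} [NeZero n] (v fS : Fin n → ℝ) (i : Fin n) : ℝ :=
  if v (priceIdx v fS) ≤ v i then v i - v (priceIdx v fS) else 0

/-- Revenue of a signal: the maximum of `v i * G i`. -/
def revSig {n : ℕ} [NeZero n] (v fS : Fin n → ℝ) : ℝ :=
  Finset.univ.sup' (by
    haveI : Nonempty (Fin n) := ⟨⟨0, Nat.pos_of_ne_zero (NeZero.ne n)⟩⟩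
    exact Finset.univ_nonempty) (fun i => v i * G v fS i)

/-- A signaling scheme for prior mass function `f`. -/
structure Scheme (n : ℕ) (f : Fin n → ℝ) where
  Q : ℕ
  sig : Fin Q → Fin n → ℝ
  wt : Fin Q → ℝ
  sig_isSignal : ∀ q, IsSignal (sig q)
  wt_nonneg : ∀ q, 0 ≤ wt q
  wt_sum : ∑ q, wt q = 1
  bayes : ∀ i, ∑ q, wt q * sig q i = f i

/-- Expected consumer surplus of value `v i` under scheme `Z`. -/
def csZ {n : ℕ} [NeZero n] (v f : Fin n → ℝ) (Z : Scheme n f) (i : Fin n) : ℝ :=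
  ∑ q, cs v (Z.sig q) i * (Z.wt q * Z.sig q i / f i)

/-- Expected revenue of a scheme. -/
def revZ {n : ℕ} [NeZero n] (v : Fin n → ℝ) {f : Fin n → ℝ} (Z : Scheme n f) : ℝ :=
  ∑ q, Z.wt q * revSig v (Z.sig q)

/-- A scheme is efficient if on every positive-weight signal, the smallest value
in the support maximizes `v * G`. -/
def Efficient {n : ℕ} (v : Fin n → ℝ) {f : Fin n → ℝ} (Z : Scheme n f) : Prop :=
  ∀ q, 0 < Z.wt q → ∀ i, (0 < Z.sig q i ∧ ∀ j, 0 < Z.sig q j → i ≤ j) →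
    ∀ j, v j * G v (Z.sig q) j ≤ v i * G v (Z.sig q) i

/-- A scheme is monotone if higher values get (weakly) higher expected surplus. -/
def MonotoneScheme {n : ℕ} [NeZero n] (v f : Fin n → ℝ) (Z : Scheme n f) : Prop :=
  ∀ i j : Fin n, v i < v j → csZ v f Z i ≤ csZ v f Z j

/-- A scheme is buyer-optimal if the total expected consumer surplus equals the
expected value minus the Myerson revenue. -/
def BuyerOptimal {n : ℕ} [NeZero n] (v f : Fin n → ℝ) (Z : Scheme n f) : Prop :=
  ∑ i, f i * csZ v f Z i = (∑ i, f i * v i) - revSig v f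

/-- The surplus-mass step function of a scheme: equal to `csZ i` on the quantile
interval `(F(v_{i-1}), F(v_i)]`. -/
def smf {n : ℕ} [NeZero n] (v f : Fin n → ℝ) (Z : Scheme n f) (x : ℝ) : ℝ :=
  ∑ i, if (∑ j ∈ Finset.univ.filter (fun j => j < i), f j) < x ∧
          x ≤ ∑ j ∈ Finset.univ.filter (fun j => j ≤ i), f j
       then csZ v f Z i else 0

/-- Sorted `m`-prefix sum of `g` on `(0,1]`: the infimum of `∫_T g` over
(measurable) subsets `T` of `(0,1]` of total length `m`. -/
def PF (g : ℝ → ℝ) (m : ℝ) : ℝ :=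
  sInf { r : ℝ | ∃ T : Set ℝ, T ⊆ Set.Ioc 0 1 ∧ MeasurableSet T ∧
    volume T = ENNReal.ofReal m ∧ r = ∫ x in T, g x }

/-- Integration `m`-prefix sum of `g`: `∫₀^m g`. -/
def PFV (g : ℝ → ℝ) (m : ℝ) : ℝ := ∫ x in Set.Ioc (0:ℝ) m, g x

/-- A singleton signal puts all mass on one value. -/
def IsSingleton {n : ℕ} (fS : Fin n → ℝ) : Prop :=
  ∃ i : Fin n, fS = fun j => if j = i then 1 else 0

/-- An equal-revenue binary signal on `v i < v j` puts mass `1 - v i / v j` on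
`v i` and `v i / v j` on `v j`. -/
def IsEqRevBinary {n : ℕ} (v : Fin n → ℝ) (fS : Fin n → ℝ) : Prop :=
  ∃ i j : Fin n, v i < v j ∧
    fS = fun l => if l = i then 1 - v i / v j else if l = j then v i / v j else 0

/-- `i` is the smallest value in the support of `fS`. -/
def MinSupp {n : ℕ} (fS : Fin n → ℝ) (i : Fin n) : Prop :=
  0 < fS i ∧ ∀ j, 0 < fS j → i ≤ j

end

-- helper lemmas
section Helpers

variable (v g : Fin 3 → ℝ)

lemma G0 (h01 : v 0 < v 1) (h12 : v 1 < v 2) : G v g 0 = g 0 + g 1 + g 2 := by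
  rw [G, Finset.sum_filter, Fin.sum_univ_three]
  rw [if_pos le_rfl, if_pos h01.le, if_pos (h01.trans h12).le]

lemma G1 (h01 : v 0 < v 1) (h12 : v 1 < v 2) : G v g 1 = g 1 + g 2 := by
  rw [G, Finset.sum_filter, Fin.sum_univ_three]
  rw [if_neg (not_le.mpr h01), if_pos le_rfl, if_pos h12.le]; ring

lemma G2 (h01 : v 0 < v 1) (h12 : v 1 < v 2) : G v g 2 = g 2 := by
  rw [G, Finset.sum_filter, Fin.sum_univ_three]
  rw [if_neg (not_le.mpr (h01.trans h12)), if_neg (not_le.mpr h12), if_pos le_rfl]; ring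

lemma priceIdx_mem : priceIdx v g ∈ Finset.univ.filter
    (fun i => ∀ j, v j * G v g j ≤ v i * G v g i) := by
  rw [priceIdx]; exact Finset.min'_mem _ _

lemma priceIdx_spec : ∀ j, v j * G v g j ≤ v (priceIdx v g) * G v g (priceIdx v g) := by
  have h := priceIdx_mem v g
  rw [Finset.mem_filter] at h
  exact h.2

lemma priceIdx_le (i : Fin 3) (hi : ∀ j, v j * G v g j ≤ v i * G v g i) :
    priceIdx v g ≤ i := by
  rw [priceIdx]
  apply Finset.min'_le
  rw [Finset.mem_filter]
  exact ⟨Finset.mem_univ _, hi⟩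

lemma revSig_eq : revSig v g = v (priceIdx v g) * G v g (priceIdx v g) := by
  rw [revSig]
  apply le_antisymm
  · exact Finset.sup'_le _ _ (fun i _ => priceIdx_spec v g i)
  · exact Finset.le_sup' (fun i => v i * G v g i) (Finset.mem_univ _)

lemma le_revSig (i : Fin 3) : v i * G v g i ≤ revSig v g := by
  rw [revSig]
  exact Finset.le_sup' (fun i => v i * G v g i) (Finset.mem_univ _)

lemma fin3_cases (p : Fin 3) : p = 0 ∨ p = 1 ∨ p = 2 := by omega

/-- per-signal surplus bound -/
lemma signal_surplus_le (h01 : v 0 < v 1) (h12 : v 1 < v 2) (h0 : 0 < v 0)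
    (hg : IsSignal g) :
    ∑ i, cs v g i * g i ≤ (∑ i, v i * g i) - revSig v g := by
  obtain ⟨hgn, hgs⟩ := hg
  rw [revSig_eq]
  set p := priceIdx v g with hp
  rcases fin3_cases p with h | h | h
  · rw [h, G0 v g h01 h12]
    simp only [cs, ← hp, h]
    rw [Fin.sum_univ_three, Fin.sum_univ_three,
      if_pos le_rfl, if_pos h01.le, if_pos (h01.trans h12).le]
    nlinarith [hgn 0, hgn 1, hgn 2]
  · rw [h, G1 v g h01 h12]
    simp only [cs, ← hp, h]
    rw [Fin.sum_univ_three, Fin.sum_univ_three,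
      if_neg (not_le.mpr h01), if_pos le_rfl, if_pos h12.le]
    nlinarith [hgn 0, hgn 1, hgn 2, h0.le]
  · rw [h, G2 v g h01 h12]
    simp only [cs, ← hp, h]
    rw [Fin.sum_univ_three, Fin.sum_univ_three,
      if_neg (not_le.mpr (h01.trans h12)), if_neg (not_le.mpr h12), if_pos le_rfl]
    nlinarith [hgn 0, hgn 1, hgn 2, h0.le, (h0.trans h01).le]

lemma cs_nonneg [NeZero 3] (i : Fin 3) : 0 ≤ cs v g i := by
  rw [cs]; split
  · next h => linarith
  · exact le_refl _

end Helpers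

section Concrete

set_option linter.unusedSectionVars false

/-- concrete values -/
noncomputable def vv (t : ℝ) : Fin 3 → ℝ := ![t^3/16, 1, 1+t]
/-- concrete prior -/
noncomputable def ff (t : ℝ) : Fin 3 → ℝ := ![(1 - t^3/16)/2, t^3/32 + t/8, 1/2 - t/8]

variable {t : ℝ} (ht : 0 < t) (ht4 : t ≤ 1/4)

lemma vv0 (t : ℝ) : vv t 0 = t^3/16 := rfl
lemma vv1 (t : ℝ) : vv t 1 = 1 := rfl
lemma vv2 (t : ℝ) : vv t 2 = 1 + t := rfl
lemma ff0 (t : ℝ) : ff t 0 = (1 - t^3/16)/2 := rfl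
lemma ff1 (t : ℝ) : ff t 1 = t^3/32 + t/8 := rfl
lemma ff2 (t : ℝ) : ff t 2 = 1/2 - t/8 := rfl

include ht ht4

lemma tcube_pos : 0 < t^3 := by positivity

lemma tcube_le : t^3 ≤ 1/64 := by
  have := pow_le_pow_left₀ ht.le ht4 3
  norm_num at this
  linarith

lemma h01 : vv t 0 < vv t 1 := by
  rw [vv0, vv1]; linarith [tcube_le ht ht4]
lemma h12 : vv t 1 < vv t 2 := by rw [vv1, vv2]; linarith
lemma h0 : 0 < vv t 0 := by rw [vv0]; positivity

lemma ffpos : ∀ i, 0 < ff t i := by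
  have h1 := tcube_pos ht ht4
  have h2 := tcube_le ht ht4
  intro i
  rcases fin3_cases i with h | h | h <;> subst h
  · rw [ff0]; linarith
  · rw [ff1]; linarith
  · rw [ff2]; linarith

lemma ffsum : ∑ i, ff t i = 1 := by
  rw [Fin.sum_univ_three, ff0, ff1, ff2]; ring

lemma cs_zero (g : Fin 3 → ℝ) : cs (vv t) g 0 = 0 := by
  rcases fin3_cases (priceIdx (vv t) g) with h | h | h <;> rw [cs, h]
  · simp
  · rw [if_neg (not_le.mpr (h01 ht ht4))]
  · rw [if_neg (not_le.mpr ((h01 ht ht4).trans (h12 ht ht4)))]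

lemma revff_le : revSig (vv t) (ff t) ≤ vv t 2 * ff t 2 := by
  rw [revSig]
  apply Finset.sup'_le
  intro i _
  rcases fin3_cases i with h | h | h <;> subst h
  · rw [G0 _ _ (h01 ht ht4) (h12 ht ht4), vv0, vv2, ff0, ff1, ff2]
    nlinarith [tcube_pos ht ht4, tcube_le ht ht4]
  · rw [G1 _ _ (h01 ht ht4) (h12 ht ht4), vv1, vv2, ff1, ff2]
    nlinarith [tcube_pos ht ht4, tcube_le ht ht4]
  · rw [G2 _ _ (h01 ht ht4) (h12 ht ht4)]

/-- main structural bound: for buyer-optimal Z the middle surplus is tiny -/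
lemma csZ1_bound (Z : Scheme 3 (ff t)) (hZ : BuyerOptimal (vv t) (ff t) Z) :
    ff t 1 * csZ (vv t) (ff t) Z 1 ≤ t^3/16 * t := by
  have h01' := h01 ht ht4
  have h12' := h12 ht ht4
  have h0' := h0 ht ht4
  have hfpos := ffpos ht ht4
  -- Step A: identity
  have stepA : ∀ i, ff t i * csZ (vv t) (ff t) Z i
      = ∑ q, cs (vv t) (Z.sig q) i * (Z.wt q * Z.sig q i) := by
    intro i
    rw [csZ, Finset.mul_sum]
    apply Finset.sum_congr rfl
    intro q _
    field_simp [(hfpos i).ne']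
  have stepA' : ∑ i, ff t i * csZ (vv t) (ff t) Z i
      = ∑ q, Z.wt q * ∑ i, cs (vv t) (Z.sig q) i * Z.sig q i := by
    calc ∑ i, ff t i * csZ (vv t) (ff t) Z i
        = ∑ i, ∑ q, cs (vv t) (Z.sig q) i * (Z.wt q * Z.sig q i) := by
          exact Finset.sum_congr rfl (fun i _ => stepA i)
      _ = ∑ q, ∑ i, cs (vv t) (Z.sig q) i * (Z.wt q * Z.sig q i) := Finset.sum_comm
      _ = ∑ q, Z.wt q * ∑ i, cs (vv t) (Z.sig q) i * Z.sig q i := by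
          apply Finset.sum_congr rfl
          intro q _
          rw [Finset.mul_sum]
          apply Finset.sum_congr rfl
          intro i _
          ring
  -- Step B: total revenue at most Myerson
  have stepB : ∑ q, Z.wt q * revSig (vv t) (Z.sig q) ≤ revSig (vv t) (ff t) := by
    have hper : ∀ q, Z.wt q * ∑ i, cs (vv t) (Z.sig q) i * Z.sig q i
        ≤ Z.wt q * ((∑ i, vv t i * Z.sig q i) - revSig (vv t) (Z.sig q)) := by
      intro q
      exact mul_le_mul_of_nonneg_left
        (signal_surplus_le _ _ h01' h12' h0' (Z.sig_isSignal q)) (Z.wt_nonneg q)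
    have hE : ∑ q, Z.wt q * ∑ i, vv t i * Z.sig q i = ∑ i, ff t i * vv t i := by
      calc ∑ q, Z.wt q * ∑ i, vv t i * Z.sig q i
          = ∑ q, ∑ i, vv t i * (Z.wt q * Z.sig q i) := by
            apply Finset.sum_congr rfl; intro q _
            rw [Finset.mul_sum]; apply Finset.sum_congr rfl; intro i _; ring
        _ = ∑ i, ∑ q, vv t i * (Z.wt q * Z.sig q i) := Finset.sum_comm
        _ = ∑ i, ff t i * vv t i := by
            apply Finset.sum_congr rfl; intro i _
            rw [← Finset.mul_sum, Z.bayes i]; ring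
    have h1 : (∑ i, ff t i * vv t i) - revSig (vv t) (ff t)
        ≤ (∑ i, ff t i * vv t i) - ∑ q, Z.wt q * revSig (vv t) (Z.sig q) := by
      calc (∑ i, ff t i * vv t i) - revSig (vv t) (ff t)
          = ∑ i, ff t i * csZ (vv t) (ff t) Z i := hZ.symm
        _ = ∑ q, Z.wt q * ∑ i, cs (vv t) (Z.sig q) i * Z.sig q i := stepA'
        _ ≤ ∑ q, Z.wt q * ((∑ i, vv t i * Z.sig q i) - revSig (vv t) (Z.sig q)) :=
            Finset.sum_le_sum (fun q _ => hper q)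
        _ = (∑ i, ff t i * vv t i) - ∑ q, Z.wt q * revSig (vv t) (Z.sig q) := by
            rw [← hE]
            rw [← Finset.sum_sub_distrib]
            apply Finset.sum_congr rfl; intro q _; ring
    linarith
  -- Step C/D: per-signal tightness
  have hterm_nonneg : ∀ q, 0 ≤ Z.wt q * (revSig (vv t) (Z.sig q) - vv t 2 * Z.sig q 2) := by
    intro q
    apply mul_nonneg (Z.wt_nonneg q)
    have := le_revSig (vv t) (Z.sig q) 2
    rw [G2 _ _ h01' h12'] at this
    linarith
  have stepD : ∀ q, Z.wt q * (revSig (vv t) (Z.sig q) - vv t 2 * Z.sig q 2) = 0 := by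
    have h2 : ∑ q, Z.wt q * (vv t 2 * Z.sig q 2) = vv t 2 * ff t 2 := by
      calc ∑ q, Z.wt q * (vv t 2 * Z.sig q 2)
          = ∑ q, vv t 2 * (Z.wt q * Z.sig q 2) := by
            apply Finset.sum_congr rfl; intro q _; ring
        _ = vv t 2 * ff t 2 := by rw [← Finset.mul_sum, Z.bayes 2]
    have expand : ∑ q, Z.wt q * (revSig (vv t) (Z.sig q) - vv t 2 * Z.sig q 2)
        = (∑ q, Z.wt q * revSig (vv t) (Z.sig q)) - ∑ q, Z.wt q * (vv t 2 * Z.sig q 2) := by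
      rw [← Finset.sum_sub_distrib]
      apply Finset.sum_congr rfl; intro q _; ring
    have hsum : ∑ q, Z.wt q * (revSig (vv t) (Z.sig q) - vv t 2 * Z.sig q 2) ≤ 0 := by
      rw [expand, h2]
      have := revff_le ht ht4
      linarith [stepB]
    have hz : ∑ q, Z.wt q * (revSig (vv t) (Z.sig q) - vv t 2 * Z.sig q 2) = 0 :=
      le_antisymm hsum (Finset.sum_nonneg (fun q _ => hterm_nonneg q))
    intro q
    exact (Finset.sum_eq_zero_iff_of_nonneg (fun q _ => hterm_nonneg q)).mp hz q
      (Finset.mem_univ q)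
  -- Step E: per-signal bound on the middle surplus
  have stepE : ∀ q, cs (vv t) (Z.sig q) 1 * (Z.wt q * Z.sig q 1) ≤ Z.wt q * (t^3/16 * t) := by
    intro q
    set g := Z.sig q with hg
    obtain ⟨hgn, hgs⟩ := Z.sig_isSignal q
    simp only [← hg] at hgn hgs
    rw [Fin.sum_univ_three] at hgs
    have hdt : 0 ≤ t^3/16 * t := by positivity
    rcases eq_or_lt_of_le (Z.wt_nonneg q) with hw | hw
    · rw [← hw]; simp
    · have hrev : revSig (vv t) g = vv t 2 * g 2 := by
        have := stepD q
        rcases mul_eq_zero.mp this with h | h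
        · exact absurd h.symm (ne_of_lt hw)
        · linarith
      rcases fin3_cases (priceIdx (vv t) g) with hp | hp | hp
      · -- price at the lowest value
        have hcs : cs (vv t) g 1 = vv t 1 - vv t 0 := by
          rw [cs, hp, if_pos h01'.le]
        have hspec1 := priceIdx_spec (vv t) g 1
        have hspec2 := priceIdx_spec (vv t) g 2
        rw [hp, G0 _ _ h01' h12', G1 _ _ h01' h12'] at hspec1
        rw [hp, G0 _ _ h01' h12', G2 _ _ h01' h12'] at hspec2
        have hle := le_revSig (vv t) g 0
        rw [hrev, G0 _ _ h01' h12'] at hle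
        -- now: vv0 = t^3/16, vv1 = 1, vv2 = 1+t
        rw [vv0, vv1, vv2] at *
        have hg2 : (1+t) * g 2 = t^3/16 := by nlinarith
        have hg2' : g 2 ≤ t^3/16 := by nlinarith [hgn 2]
        have hg1 : g 1 ≤ t^3/16 * t := by nlinarith [hgn 2]
        rw [hcs]
        calc (1 - t^3/16) * (Z.wt q * g 1) = Z.wt q * ((1 - t^3/16) * g 1) := by ring
          _ ≤ Z.wt q * g 1 := by
              have hc : (0:ℝ) ≤ t^3/16 := by positivity
              nlinarith [mul_nonneg hw.le (mul_nonneg hc (hgn 1))]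
          _ ≤ Z.wt q * (t^3/16 * t) := mul_le_mul_of_nonneg_left hg1 hw.le
      · have hcs : cs (vv t) g 1 = 0 := by rw [cs, hp, if_pos le_rfl]; ring
        rw [hcs]; simpa using mul_nonneg (le_of_lt hw) hdt
      · have hcs : cs (vv t) g 1 = 0 := by rw [cs, hp, if_neg (not_le.mpr h12')]
        rw [hcs]; simpa using mul_nonneg (le_of_lt hw) hdt
  calc ff t 1 * csZ (vv t) (ff t) Z 1
      = ∑ q, cs (vv t) (Z.sig q) 1 * (Z.wt q * Z.sig q 1) := stepA 1
    _ ≤ ∑ q, Z.wt q * (t^3/16 * t) := Finset.sum_le_sum (fun q _ => stepE q)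
    _ = t^3/16 * t := by rw [← Finset.sum_mul, Z.wt_sum, one_mul]

end Concrete

section Integrals

open Set

lemma ind_integrableOn (c : ℝ) (s T : Set ℝ) (hs : MeasurableSet s)
    (hTfin : volume T < ⊤) :
    IntegrableOn (s.indicator (fun _ => c)) T volume := by
  exact (integrableOn_const hTfin.ne).indicator hs

lemma ind_setIntegral (c : ℝ) (s T : Set ℝ) (hs : MeasurableSet s) :
    ∫ x in T, s.indicator (fun _ => c) x = c * (volume (s ∩ T)).toReal := by
  rw [MeasureTheory.setIntegral_indicator hs, MeasureTheory.setIntegral_const,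
    Set.inter_comm, smul_eq_mul, mul_comm]
  rfl

lemma step_integral (c0 c1 c2 a b : ℝ) (T : Set ℝ)
    (hTm : MeasurableSet T) (hT1 : T ⊆ Set.Ioc 0 1) :
    ∫ x in T, ((Set.Ioc 0 a).indicator (fun _ => c0) x
      + (Set.Ioc a b).indicator (fun _ => c1) x
      + (Set.Ioc b 1).indicator (fun _ => c2) x)
    = c0 * (volume (Set.Ioc 0 a ∩ T)).toReal
      + c1 * (volume (Set.Ioc a b ∩ T)).toReal
      + c2 * (volume (Set.Ioc b 1 ∩ T)).toReal := by
  have hTfin : volume T < ⊤ := by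
    refine lt_of_le_of_lt (measure_mono hT1) ?_
    rw [Real.volume_Ioc]
    exact ENNReal.ofReal_lt_top
  have i0 := ind_integrableOn c0 (Set.Ioc 0 a) T measurableSet_Ioc hTfin
  have i1 := ind_integrableOn c1 (Set.Ioc a b) T measurableSet_Ioc hTfin
  have i2 := ind_integrableOn c2 (Set.Ioc b 1) T measurableSet_Ioc hTfin
  have i01 : IntegrableOn (fun x => (Set.Ioc 0 a).indicator (fun _ => c0) x
      + (Set.Ioc a b).indicator (fun _ => c1) x) T volume := i0.add i1
  rw [MeasureTheory.integral_add i01 i2, MeasureTheory.integral_add i0 i1,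
    ind_setIntegral, ind_setIntegral, ind_setIntegral] <;> try exact measurableSet_Ioc

lemma PF_le_of (g : ℝ → ℝ) (m r : ℝ) (hm1 : m ≤ 1)
    (hg0 : ∀ x, 0 ≤ g x) (hr : ∫ x in Set.Ioc 0 m, g x = r) : PF g m ≤ r := by
  apply csInf_le
  · refine ⟨0, ?_⟩
    rintro s ⟨T, hT1, hTm, hTv, rfl⟩
    exact MeasureTheory.setIntegral_nonneg hTm (fun x _ => hg0 x)
  · exact ⟨Set.Ioc 0 m, Set.Ioc_subset_Ioc le_rfl hm1, measurableSet_Ioc,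
      by rw [Real.volume_Ioc, sub_zero], hr.symm⟩

lemma PF_ge_of (g : ℝ → ℝ) (m c : ℝ) (hm1 : m ≤ 1)
    (h : ∀ T : Set ℝ, T ⊆ Set.Ioc 0 1 → MeasurableSet T →
      volume T = ENNReal.ofReal m → c ≤ ∫ x in T, g x) : c ≤ PF g m := by
  apply le_csInf
  · exact ⟨∫ x in Set.Ioc 0 m, g x, Set.Ioc 0 m, Set.Ioc_subset_Ioc le_rfl hm1,
      measurableSet_Ioc, by rw [Real.volume_Ioc, sub_zero], rfl⟩
  · rintro s ⟨T, hT1, hTm, hTv, rfl⟩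
    exact h T hT1 hTm hTv

/-- key measure lower bound -/
lemma tail_volume_ge (a m : ℝ) (ha : 0 ≤ a) (T : Set ℝ)
    (hT1 : T ⊆ Set.Ioc 0 1) (hTv : volume T = ENNReal.ofReal m) :
    m - a ≤ (volume (Set.Ioc a 1 ∩ T)).toReal := by
  have hfin : volume (Set.Ioc a 1 ∩ T) < ⊤ := by
    refine lt_of_le_of_lt (measure_mono (Set.inter_subset_left)) ?_
    rw [Real.volume_Ioc]; exact ENNReal.ofReal_lt_top
  have hcover : T ⊆ Set.Ioc 0 a ∪ (Set.Ioc a 1 ∩ T) := by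
    intro x hx
    have hx1 := hT1 hx
    by_cases hxa : x ≤ a
    · exact Or.inl ⟨hx1.1, hxa⟩
    · exact Or.inr ⟨⟨not_le.mp hxa, hx1.2⟩, hx⟩
  have hv : ENNReal.ofReal m ≤ ENNReal.ofReal a + volume (Set.Ioc a 1 ∩ T) := by
    calc ENNReal.ofReal m = volume T := hTv.symm
      _ ≤ volume (Set.Ioc 0 a ∪ (Set.Ioc a 1 ∩ T)) := measure_mono hcover
      _ ≤ volume (Set.Ioc 0 a) + volume (Set.Ioc a 1 ∩ T) := measure_union_le _ _
      _ = ENNReal.ofReal a + volume (Set.Ioc a 1 ∩ T) := by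
          rw [Real.volume_Ioc, sub_zero]
  have := ENNReal.toReal_mono (by
      exact ENNReal.add_ne_top.mpr ⟨ENNReal.ofReal_ne_top, hfin.ne⟩) hv
  rw [ENNReal.toReal_add ENNReal.ofReal_ne_top hfin.ne, ENNReal.toReal_ofReal ha] at this
  have hm' : m ≤ ENNReal.toReal (ENNReal.ofReal m) := by
    rcases le_or_gt m 0 with h | h
    · exact h.trans ENNReal.toReal_nonneg
    · rw [ENNReal.toReal_ofReal h.le]
  linarith

end Integrals

section SmfLemmas

lemma filt0lt : Finset.univ.filter (fun j : Fin 3 => j < 0) = ∅ := by decide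
lemma filt0le : Finset.univ.filter (fun j : Fin 3 => j ≤ 0) = {0} := by decide
lemma filt1lt : Finset.univ.filter (fun j : Fin 3 => j < 1) = {0} := by decide
lemma filt1le : Finset.univ.filter (fun j : Fin 3 => j ≤ 1) = {0, 1} := by decide
lemma filt2lt : Finset.univ.filter (fun j : Fin 3 => j < 2) = {0, 1} := by decide
lemma filt2le : Finset.univ.filter (fun j : Fin 3 => j ≤ 2) = {0, 1, 2} := by decide

lemma smf_eq (v f : Fin 3 → ℝ) (Z : Scheme 3 f) (hsum : f 0 + f 1 + f 2 = 1) :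
    smf v f Z = fun x =>
      ((Set.Ioc 0 (f 0)).indicator (fun _ => csZ v f Z 0) x
      + (Set.Ioc (f 0) (f 0 + f 1)).indicator (fun _ => csZ v f Z 1) x
      + (Set.Ioc (f 0 + f 1) 1).indicator (fun _ => csZ v f Z 2) x) := by
  funext x
  rw [smf, Fin.sum_univ_three, filt0lt, filt0le, filt1lt, filt1le, filt2lt, filt2le]
  rw [Finset.sum_empty, Finset.sum_singleton,
    Finset.sum_pair (by decide : (0:Fin 3) ≠ 1),
    (by rw [Finset.sum_insert (by decide), Finset.sum_pair (by decide : (1:Fin 3) ≠ 2)]; ring :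
      ∑ j ∈ ({0,1,2} : Finset (Fin 3)), f j = f 0 + f 1 + f 2), hsum]
  simp only [Set.indicator_apply, Set.mem_Ioc]

lemma csZ_nonneg (v f : Fin 3 → ℝ) (hf : ∀ i, 0 < f i) (Z : Scheme 3 f) (i : Fin 3) :
    0 ≤ csZ v f Z i := by
  rw [csZ]
  apply Finset.sum_nonneg
  intro q _
  apply mul_nonneg (cs_nonneg _ _ _)
  apply div_nonneg (mul_nonneg (Z.wt_nonneg q) ((Z.sig_isSignal q).1 i)) (hf i).le

lemma smf_nonneg (v f : Fin 3 → ℝ) (hf : ∀ i, 0 < f i) (Z : Scheme 3 f) (x : ℝ) :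
    0 ≤ smf v f Z x := by
  rw [smf]
  apply Finset.sum_nonneg
  intro i _
  split
  · exact csZ_nonneg v f hf Z i
  · exact le_refl _

end SmfLemmas

section PFbounds

variable {t : ℝ} (ht : 0 < t) (ht4 : t ≤ 1/4)

include ht ht4

lemma csZ0_eq (Z : Scheme 3 (ff t)) : csZ (vv t) (ff t) Z 0 = 0 := by
  rw [csZ]
  apply Finset.sum_eq_zero
  intro q _
  rw [cs_zero ht ht4, zero_mul]

lemma PF_upper (Z : Scheme 3 (ff t)) :
    PF (smf (vv t) (ff t) Z) (ff t 0 + ff t 1) ≤ ff t 1 * csZ (vv t) (ff t) Z 1 := by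
  have hfpos := ffpos ht ht4
  have hsum : ff t 0 + ff t 1 + ff t 2 = 1 := by
    have := ffsum ht ht4; rwa [Fin.sum_univ_three] at this
  set a := ff t 0 with ha
  set b := ff t 0 + ff t 1 with hb
  have ha0 : 0 < a := hfpos 0
  have hab : a ≤ b := by rw [hb]; linarith [(hfpos 1).le]
  have hb1 : b ≤ 1 := by rw [hb]; linarith [(hfpos 2).le]
  apply PF_le_of _ _ _ hb1 (smf_nonneg _ _ hfpos Z)
  rw [smf_eq _ _ Z hsum,
    step_integral _ _ _ _ _ _ measurableSet_Ioc (Set.Ioc_subset_Ioc le_rfl hb1)]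
  rw [Set.inter_eq_self_of_subset_left (Set.Ioc_subset_Ioc_right hab),
    Set.inter_eq_self_of_subset_left (Set.Ioc_subset_Ioc_left ha0.le),
    Set.Ioc_inter_Ioc, max_eq_left (by linarith : (0:ℝ) ≤ b),
    min_eq_right hb1, Set.Ioc_self]
  rw [csZ0_eq ht ht4, Real.volume_Ioc, Real.volume_Ioc, measure_empty]
  rw [ENNReal.toReal_ofReal (by linarith : (0:ℝ) ≤ b - a)]
  simp only [ENNReal.toReal_zero, mul_zero, zero_mul, add_zero, zero_add]
  rw [hb]
  ring

lemma PF_lower (Z : Scheme 3 (ff t)) (κ : ℝ) (hκ0 : 0 ≤ κ)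
    (hκ1 : κ ≤ csZ (vv t) (ff t) Z 1) (hκ2 : κ ≤ csZ (vv t) (ff t) Z 2) :
    κ * ff t 1 ≤ PF (smf (vv t) (ff t) Z) (ff t 0 + ff t 1) := by
  have hfpos := ffpos ht ht4
  have hsum : ff t 0 + ff t 1 + ff t 2 = 1 := by
    have := ffsum ht ht4; rwa [Fin.sum_univ_three] at this
  set a := ff t 0 with ha
  set b := ff t 0 + ff t 1 with hb
  have ha0 : 0 < a := hfpos 0
  have hab : a ≤ b := by rw [hb]; linarith [(hfpos 1).le]
  have hb1 : b ≤ 1 := by rw [hb]; linarith [(hfpos 2).le]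
  apply PF_ge_of _ _ _ hb1
  intro T hT1 hTm hTv
  rw [smf_eq _ _ Z hsum, step_integral _ _ _ _ _ _ hTm hT1, csZ0_eq ht ht4]
  have hfin1 : volume (Set.Ioc a b ∩ T) ≠ ⊤ := by
    refine (lt_of_le_of_lt (measure_mono Set.inter_subset_left) ?_).ne
    rw [Real.volume_Ioc]; exact ENNReal.ofReal_lt_top
  have hfin2 : volume (Set.Ioc b 1 ∩ T) ≠ ⊤ := by
    refine (lt_of_le_of_lt (measure_mono Set.inter_subset_left) ?_).ne
    rw [Real.volume_Ioc]; exact ENNReal.ofReal_lt_top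
  have hunion : volume (Set.Ioc a 1 ∩ T)
      = volume (Set.Ioc a b ∩ T) + volume (Set.Ioc b 1 ∩ T) := by
    rw [← Set.Ioc_union_Ioc_eq_Ioc hab hb1, Set.union_inter_distrib_right]
    exact measure_union ((Set.Ioc_disjoint_Ioc_of_le le_rfl).mono Set.inter_subset_left
      Set.inter_subset_left) (measurableSet_Ioc.inter hTm)
  have htail : b - a ≤ (volume (Set.Ioc a b ∩ T)).toReal
      + (volume (Set.Ioc b 1 ∩ T)).toReal := by
    have h1 := tail_volume_ge a b ha0.le T hT1 (by rw [hTv])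
    rw [hunion, ENNReal.toReal_add hfin1 hfin2] at h1
    exact h1
  have hV1 : (0:ℝ) ≤ (volume (Set.Ioc a b ∩ T)).toReal := ENNReal.toReal_nonneg
  have hV2 : (0:ℝ) ≤ (volume (Set.Ioc b 1 ∩ T)).toReal := ENNReal.toReal_nonneg
  have hba : b - a = ff t 1 := by rw [hb]; ring
  nlinarith [mul_le_mul_of_nonneg_right hκ1 hV1, mul_le_mul_of_nonneg_right hκ2 hV2]

end PFbounds

/-- the three signals of the alternative scheme -/
noncomputable def sA (t : ℝ) : Fin 3 → ℝ := ![1 - t^3/16, t^3/16, 0]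
noncomputable def sB : Fin 3 → ℝ := ![0, 1/2, 1/2]
noncomputable def sC : Fin 3 → ℝ := ![0, 0, 1]

lemma sA0 (t : ℝ) : sA t 0 = 1 - t^3/16 := rfl
lemma sA1 (t : ℝ) : sA t 1 = t^3/16 := rfl
lemma sA2 (t : ℝ) : sA t 2 = 0 := rfl
lemma sB0 : sB 0 = 0 := rfl
lemma sB1 : sB 1 = 1/2 := rfl
lemma sB2 : sB 2 = 1/2 := rfl
lemma sC0 : sC 0 = 0 := rfl
lemma sC1 : sC 1 = 0 := rfl
lemma sC2 : sC 2 = 1 := rfl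

/-- the alternative scheme -/
noncomputable def Zp (u : ℝ) (hu : 0 < u) (hu4 : u ≤ 1/4) : Scheme 3 (ff u) where
  Q := 3
  sig := ![sA u, sB, sC]
  wt := ![1/2, u/4, 1/2 - u/4]
  sig_isSignal := by
    intro q
    rcases fin3_cases q with h | h | h <;> subst h <;> constructor
    · intro i
      rcases fin3_cases i with h | h | h <;> subst h <;>
        simp only [Matrix.cons_val_zero, Matrix.cons_val_one, Matrix.head_cons, sA0, sA1, sA2]
      · nlinarith [tcube_le hu hu4]
      · positivity
      · exact le_refl _
    · show ∑ i, sA u i = 1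
      rw [Fin.sum_univ_three, sA0, sA1, sA2]; ring
    · intro i
      rcases fin3_cases i with h | h | h <;> subst h <;> norm_num [sB0, sB1, sB2]
    · show ∑ i, sB i = 1
      rw [Fin.sum_univ_three, sB0, sB1, sB2]; ring
    · intro i
      show 0 ≤ sC i
      rcases fin3_cases i with h | h | h <;> subst h <;> norm_num [sC0, sC1, sC2]
    · show ∑ i, sC i = 1
      rw [Fin.sum_univ_three, sC0, sC1, sC2]; ring
  wt_nonneg := by
    intro q
    rcases fin3_cases q with h | h | h <;> subst h
    · show (0:ℝ) ≤ 1/2; linarith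
    · show (0:ℝ) ≤ u/4; linarith
    · show (0:ℝ) ≤ 1/2 - u/4; linarith
  wt_sum := by
    rw [Fin.sum_univ_three]
    show (1:ℝ)/2 + u/4 + (1/2 - u/4) = 1
    ring
  bayes := by
    intro i
    rw [Fin.sum_univ_three]
    rcases fin3_cases i with h | h | h <;> subst h
    · show (1:ℝ)/2 * sA u 0 + u/4 * sB 0 + (1/2 - u/4) * sC 0 = ff u 0
      rw [sA0, sB0, sC0, ff0]; ring
    · show (1:ℝ)/2 * sA u 1 + u/4 * sB 1 + (1/2 - u/4) * sC 1 = ff u 1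
      rw [sA1, sB1, sC1, ff1]; ring
    · show (1:ℝ)/2 * sA u 2 + u/4 * sB 2 + (1/2 - u/4) * sC 2 = ff u 2
      rw [sA2, sB2, sC2, ff2]; ring



section Zprime

variable {t : ℝ} (ht : 0 < t) (ht4 : t ≤ 1/4)

include ht ht4

lemma pA : priceIdx (vv t) (sA t) = 0 := by
  apply Fin.le_zero_iff.mp
  apply priceIdx_le
  intro j
  rcases fin3_cases j with h | h | h <;> subst h
  · exact le_refl _
  · rw [G0 _ _ (h01 ht ht4) (h12 ht ht4), G1 _ _ (h01 ht ht4) (h12 ht ht4),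
      vv0, vv1, sA0, sA1, sA2]
    nlinarith [tcube_pos ht ht4, tcube_le ht ht4]
  · rw [G0 _ _ (h01 ht ht4) (h12 ht ht4), G2 _ _ (h01 ht ht4) (h12 ht ht4),
      vv0, vv2, sA0, sA1, sA2]
    nlinarith [tcube_pos ht ht4, tcube_le ht ht4]

lemma pB : priceIdx (vv t) sB = 1 := by
  have hup : priceIdx (vv t) sB ≤ 1 := by
    apply priceIdx_le
    intro j
    rcases fin3_cases j with h | h | h <;> subst h
    · rw [G0 _ _ (h01 ht ht4) (h12 ht ht4), G1 _ _ (h01 ht ht4) (h12 ht ht4),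
        vv0, vv1, sB0, sB1, sB2]
      nlinarith [tcube_pos ht ht4, tcube_le ht ht4]
    · exact le_rfl
    · rw [G2 _ _ (h01 ht ht4) (h12 ht ht4), G1 _ _ (h01 ht ht4) (h12 ht ht4),
        vv2, vv1, sB1, sB2]
      nlinarith
  have hne : priceIdx (vv t) sB ≠ 0 := by
    intro h0
    have := priceIdx_spec (vv t) sB 1
    rw [h0, G0 _ _ (h01 ht ht4) (h12 ht ht4), G1 _ _ (h01 ht ht4) (h12 ht ht4),
      vv0, vv1, sB0, sB1, sB2] at this
    nlinarith [tcube_le ht ht4]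
  omega

lemma pC : priceIdx (vv t) sC = 2 := by
  have h0 : priceIdx (vv t) sC ≠ 0 := by
    intro h0
    have := priceIdx_spec (vv t) sC 2
    rw [h0, G0 _ _ (h01 ht ht4) (h12 ht ht4), G2 _ _ (h01 ht ht4) (h12 ht ht4),
      vv0, vv2, sC0, sC1, sC2] at this
    nlinarith [tcube_le ht ht4]
  have h1 : priceIdx (vv t) sC ≠ 1 := by
    intro h1
    have := priceIdx_spec (vv t) sC 2
    rw [h1, G1 _ _ (h01 ht ht4) (h12 ht ht4), G2 _ _ (h01 ht ht4) (h12 ht ht4),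
      vv1, vv2, sC1, sC2] at this
    nlinarith
  omega

lemma Zp_cs1 : ff t 1 * csZ (vv t) (ff t) (Zp t ht ht4) 1
    = (1 - t^3/16) * (t^3/16) / 2 := by
  have hf1 := (ffpos ht ht4 1).ne'
  rw [csZ]
  show ff t 1 * (∑ q : Fin 3, cs (vv t) ((Zp t ht ht4).sig q) 1
    * ((Zp t ht ht4).wt q * (Zp t ht ht4).sig q 1 / ff t 1)) = _
  rw [Fin.sum_univ_three]
  show ff t 1 * (cs (vv t) (sA t) 1 * ((1/2) * sA t 1 / ff t 1)
    + cs (vv t) sB 1 * ((t/4) * sB 1 / ff t 1)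
    + cs (vv t) sC 1 * ((1/2 - t/4) * sC 1 / ff t 1)) = _
  rw [show cs (vv t) (sA t) 1 = 1 - t^3/16 by
      rw [cs, pA ht ht4, if_pos (h01 ht ht4).le, vv0, vv1],
    show cs (vv t) sB 1 = 0 by rw [cs, pB ht ht4, if_pos le_rfl, sub_self],
    sA1, sC1]
  field_simp
  ring

lemma Zp_cs2 : ff t 2 * csZ (vv t) (ff t) (Zp t ht ht4) 2 = t * t / 8 := by
  have hf2 := (ffpos ht ht4 2).ne'
  rw [csZ]
  show ff t 2 * (∑ q : Fin 3, cs (vv t) ((Zp t ht ht4).sig q) 2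
    * ((Zp t ht ht4).wt q * (Zp t ht ht4).sig q 2 / ff t 2)) = _
  rw [Fin.sum_univ_three]
  show ff t 2 * (cs (vv t) (sA t) 2 * ((1/2) * sA t 2 / ff t 2)
    + cs (vv t) sB 2 * ((t/4) * sB 2 / ff t 2)
    + cs (vv t) sC 2 * ((1/2 - t/4) * sC 2 / ff t 2)) = _
  rw [show cs (vv t) sB 2 = t by
      rw [cs, pB ht ht4, if_pos (h12 ht ht4).le, vv1, vv2]; ring,
    show cs (vv t) sC 2 = 0 by rw [cs, pC ht ht4, if_pos le_rfl, sub_self],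
    sA2, sB2]
  field_simp
  ring

end Zprime

theorem stmt17 (α : ℝ) (hα : 1 ≤ α) :
    ∃ (v f : Fin 3 → ℝ), StrictMono v ∧ (∀ i, 0 < v i) ∧
      (∀ i, 0 < f i) ∧ (∑ i, f i = 1) ∧
      ∀ Z : Scheme 3 f, BuyerOptimal v f Z →
        ∃ (Z' : Scheme 3 f) (m : ℝ), 0 < m ∧ m ≤ 1 ∧
          α * PF (smf v f Z) m < PF (smf v f Z') m := by
  have hα0 : 0 < α := by linarith
  set t := 1/(4*α) with htdef
  have ht : 0 < t := by rw [htdef]; positivity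
  have ht4 : t ≤ 1/4 := by
    rw [htdef]
    rw [div_le_div_iff₀ (by positivity) (by norm_num)]
    linarith
  have hαt : α * t = 1/4 := by
    rw [htdef]; field_simp
  have h01' := h01 ht ht4
  have h12' := h12 ht ht4
  have hfpos := ffpos ht ht4
  refine ⟨vv t, ff t, ?_, ?_, hfpos, ffsum ht ht4, ?_⟩
  · intro i j hij
    rcases fin3_cases i with hi|hi|hi <;> rcases fin3_cases j with hj|hj|hj <;>
      subst hi <;> subst hj <;>
      first
        | exact absurd hij (by decide)
        | exact h01'
        | exact h12'
        | exact h01'.trans h12'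
  · intro i
    rcases fin3_cases i with h|h|h <;> subst h
    · exact h0 ht ht4
    · rw [vv1]; norm_num
    · rw [vv2]; linarith
  · intro Z hZ
    have hsum3 : ff t 0 + ff t 1 + ff t 2 = 1 := by
      have := ffsum ht ht4; rwa [Fin.sum_univ_three] at this
    have hm0 : 0 < ff t 0 + ff t 1 := by linarith [hfpos 0, hfpos 1]
    have hm1 : ff t 0 + ff t 1 ≤ 1 := by linarith [hfpos 2]
    refine ⟨Zp t ht ht4, ff t 0 + ff t 1, hm0, hm1, ?_⟩
    have hPFup := PF_upper ht ht4 Z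
    have hbound := csZ1_bound ht ht4 Z hZ
    set κ := min (csZ (vv t) (ff t) (Zp t ht ht4) 1) (csZ (vv t) (ff t) (Zp t ht ht4) 2)
      with hκdef
    have hκ0 : 0 ≤ κ := le_min (csZ_nonneg _ _ hfpos _ 1) (csZ_nonneg _ _ hfpos _ 2)
    have hlow := PF_lower ht ht4 (Zp t ht ht4) κ hκ0 (min_le_left _ _) (min_le_right _ _)
    have hc2 : csZ (vv t) (ff t) (Zp t ht ht4) 2 = (t * t / 8) / ff t 2 := by
      rw [eq_div_iff (hfpos 2).ne', mul_comm]
      exact Zp_cs2 ht ht4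
    have hc1 : csZ (vv t) (ff t) (Zp t ht ht4) 1
        = ((1 - t^3/16) * (t^3/16) / 2) / ff t 1 := by
      rw [eq_div_iff (hfpos 1).ne', mul_comm]
      exact Zp_cs1 ht ht4
    have hkey : α * (t^3/16 * t) < κ * ff t 1 := by
      have hαs : α * (t^3/16 * t) = t^3/16/4 := by
        rw [show α * (t^3/16 * t) = t^3/16 * (α * t) by ring, hαt]; ring
      rw [hαs]
      rcases min_cases (csZ (vv t) (ff t) (Zp t ht ht4) 1)
        (csZ (vv t) (ff t) (Zp t ht ht4) 2) with ⟨hmin, _⟩ | ⟨hmin, _⟩ <;>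
        rw [hκdef, hmin]
      · rw [hc1, div_mul_cancel₀ _ (hfpos 1).ne']
        nlinarith [tcube_pos ht ht4, tcube_le ht ht4]
      · rw [hc2, div_mul_eq_mul_div, lt_div_iff₀ (hfpos 2)]
        rw [ff1, ff2]
        nlinarith [pow_pos ht 3, tcube_le ht ht4]
    have hup2 : α * PF (smf (vv t) (ff t) Z) (ff t 0 + ff t 1) ≤ α * (t^3/16 * t) :=
      mul_le_mul_of_nonneg_left (hPFup.trans hbound) hα0.le
    exact lt_of_le_of_lt hup2 (lt_of_lt_of_le hkey hlow)
end PD
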